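/- Let L/K be a Galois extension with Galois group G, let K'/K be a finite extension linearly disjoint from L over K (inside a common algebraic closure), and let L' = LK'. Then the map sending an intermediate field M of L/K to MK' is an inclusion-preserving bijection between intermediate fields of L/K and intermediate fields of L'/K', with inverse M' ↦ M' ∩ L. -/

import Mathlib

set_option maxHeartbeats 1000000
set_option linter.unusedSectionVars false

open Polynomial IntermediateField

section Helpers

variable {K : Type*} [Field K] [CharZero K]

/-- The subfield of elements fixed by a `K`-automorphism of the algebraic closure. -/
private noncomputable def fixedIF (τ : AlgebraicClosure K ≃ₐ[K] AlgebraicClosure K) :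
    IntermediateField K (AlgebraicClosure K) :=
  (AlgHom.equalizer (τ : AlgebraicClosure K →ₐ[K] AlgebraicClosure K)
      (AlgHom.id K (AlgebraicClosure K))).toIntermediateField
    (fun x hx => by
      have h : τ x = x := hx
      show τ x⁻¹ = x⁻¹
      rw [map_inv₀, h])


/-- The subfield of elements fixed by a `K`-automorphism of the algebraic closure. -/
private lemma mem_fixedIF {τ : AlgebraicClosure K ≃ₐ[K] AlgebraicClosure K}
    {x : AlgebraicClosure K} : x ∈ fixedIF τ ↔ τ x = x := Iff.rfl


/-- If `F` is normal over `K` and `w` is a root of the minimal polynomial of an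
element `z` of `F`, then `w ∈ F`. -/
private lemma mem_of_root (F : IntermediateField K (AlgebraicClosure K)) [Normal K ↥F]
    {z w : AlgebraicClosure K} (hz : z ∈ F)
    (hw : Polynomial.aeval w (minpoly K z) = 0) : w ∈ F := by
  have hmp : minpoly K z = minpoly K (⟨z, hz⟩ : F) := by
    have := minpoly.algebraMap_eq (B := ↥F) (B' := AlgebraicClosure K) (A := K)
      (algebraMap ↥F (AlgebraicClosure K)).injective ⟨z, hz⟩
    simp only [IntermediateField.algebraMap_apply] at this
    exact this
  set q : K[X] := minpoly K (⟨z, hz⟩ : F) with hq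
  have hint : IsIntegral K (⟨z, hz⟩ : F) := Algebra.IsIntegral.isIntegral _
  have hsplit : (q.map (algebraMap K ↥F)).Splits :=
    Normal.splits inferInstance _
  have hmapmap : q.map (algebraMap K (AlgebraicClosure K))
      = (q.map (algebraMap K ↥F)).map (algebraMap ↥F (AlgebraicClosure K)) := by
    rw [Polynomial.map_map, ← IsScalarTower.algebraMap_eq]
  have hw' : w ∈ (q.map (algebraMap K (AlgebraicClosure K))).roots := by
    rw [mem_roots']
    constructor
    · exact ((minpoly.monic hint).map _).ne_zero
    · rw [IsRoot, eval_map, ← aeval_def, ← hmp]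
      exact hw
  rw [hmapmap, hsplit.roots_map_of_injective (algebraMap ↥F (AlgebraicClosure K)).injective] at hw'
  obtain ⟨u, _, rfl⟩ := Multiset.mem_map.mp hw'
  exact u.2


/-- Given a root `y` of the minimal polynomial of `x` over an intermediate field `F`,
there is a `K`-automorphism of the algebraic closure fixing `F` and sending `x` to `y`. -/
private lemma exists_algEquiv_of_root (F : IntermediateField K (AlgebraicClosure K))
    {x y : AlgebraicClosure K}
    (hy : Polynomial.aeval y (minpoly (↥F) x) = 0) :
    ∃ σ : AlgebraicClosure K ≃ₐ[K] AlgebraicClosure K,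
      (∀ a ∈ F, σ a = a) ∧ σ x = y := by
  haveI : Algebra.IsAlgebraic (↥F) (AlgebraicClosure K) :=
    Algebra.IsAlgebraic.tower_top (K := K) (↥F)
  have hx : IsIntegral (↥F) x := Algebra.IsIntegral.isIntegral x
  have hy' : y ∈ (minpoly (↥F) x).aroots (AlgebraicClosure K) := by
    rw [Polynomial.mem_aroots]
    exact ⟨minpoly.ne_zero hx, hy⟩
  let g : ↥(F⟮x⟯) →ₐ[↥F] AlgebraicClosure K :=
    (IntermediateField.algHomAdjoinIntegralEquiv (↥F) hx).symm ⟨y, hy'⟩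
  haveI : IsAlgClosure (↥F) (AlgebraicClosure K) :=
    ⟨inferInstance, inferInstance⟩
  haveI : Normal (↥F) (AlgebraicClosure K) := IsAlgClosure.normal (↥F) (AlgebraicClosure K)
  let g' : AlgebraicClosure K →ₐ[↥F] AlgebraicClosure K := g.liftNormal (AlgebraicClosure K)
  have hbij : Function.Bijective g' := Algebra.IsAlgebraic.algHom_bijective g'
  let δ : AlgebraicClosure K ≃ₐ[↥F] AlgebraicClosure K := AlgEquiv.ofBijective g' hbij
  refine ⟨δ.restrictScalars K, ?_, ?_⟩
  · intro a ha
    show g' a = a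
    have : a = algebraMap (↥F) (AlgebraicClosure K) ⟨a, ha⟩ := rfl
    rw [this, g'.commutes]
  · show g' x = y
    have hxg : x = algebraMap (↥(F⟮x⟯)) (AlgebraicClosure K)
        (IntermediateField.AdjoinSimple.gen (↥F) x) := rfl
    rw [hxg, AlgHom.liftNormal_commutes]
    show g (IntermediateField.AdjoinSimple.gen (↥F) x) = y
    rw [IntermediateField.algHomAdjoinIntegralEquiv_symm_apply_gen]


/-- In characteristic zero, an element of the algebraic closure fixed by all automorphisms
fixing `F` pointwise belongs to `F`. -/
private lemma mem_of_forall_fixed {F : IntermediateField K (AlgebraicClosure K)}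
    {x : AlgebraicClosure K}
    (h : ∀ σ : AlgebraicClosure K ≃ₐ[K] AlgebraicClosure K, (∀ a ∈ F, σ a = a) → σ x = x) :
    x ∈ F := by
  by_contra hx
  haveI : Algebra.IsAlgebraic (↥F) (AlgebraicClosure K) :=
    Algebra.IsAlgebraic.tower_top (K := K) (↥F)
  haveI : CharZero (↥F) := charZero_of_injective_algebraMap (algebraMap K ↥F).injective
  have hint : IsIntegral (↥F) x := Algebra.IsIntegral.isIntegral x
  set m : (↥F)[X] := minpoly (↥F) x with hm
  have hsep : m.Separable := IsSeparable.of_integral (↥F) x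
  have hdeg : 2 ≤ m.natDegree := by
    rw [minpoly.two_le_natDegree_iff hint]
    intro hmem
    apply hx
    obtain ⟨u, hu⟩ := hmem
    have : (u : AlgebraicClosure K) = x := hu
    exact this ▸ u.2
  set mm := m.map (algebraMap (↥F) (AlgebraicClosure K)) with hmm
  have hsplits : mm.Splits :=
    IsAlgClosed.splits mm
  have hcard : mm.roots.card = m.natDegree := by
    rw [← hsplits.natDegree_eq_card_roots, hmm, natDegree_map]
  have hnodup : mm.roots.Nodup := nodup_roots (hsep.map)
  have hxroot : x ∈ mm.roots := by
    rw [mem_roots']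
    exact ⟨((minpoly.monic hint).map _).ne_zero, by
      rw [IsRoot, eval_map, ← aeval_def]; exact minpoly.aeval _ _⟩
  have : ∃ y ∈ mm.roots, y ≠ x := by
    by_contra hc
    push_neg at hc
    have : mm.roots = Multiset.replicate mm.roots.card x :=
      Multiset.eq_replicate_card.mpr hc
    rw [this] at hnodup
    classical
    rw [Multiset.nodup_iff_count_le_one] at hnodup
    have h2 := hnodup x
    rw [Multiset.count_replicate_self, hcard] at h2
    omega
  obtain ⟨y, hyroot, hyx⟩ := this
  have hy : Polynomial.aeval y m = 0 := by
    have := (mem_roots'.mp hyroot).2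
    rwa [IsRoot, eval_map, ← aeval_def] at this
  obtain ⟨σ, hσF, hσx⟩ := exists_algEquiv_of_root F hy
  exact hyx (hσx ▸ h σ hσF)


/-- Every `K`-automorphism of the algebraic closure can be modified into one that agrees
with it on `L` and fixes the normal closure of `K'` pointwise. -/
private lemma exists_extend_fixing (L K' : IntermediateField K (AlgebraicClosure K))
    [IsGalois K ↥L] (hfin : FiniteDimensional K ↥K')
    (hdisj : L ⊓ normalClosure K ↥K' (AlgebraicClosure K) = ⊥)
    (σ : AlgebraicClosure K ≃ₐ[K] AlgebraicClosure K) :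
    ∃ τ : AlgebraicClosure K ≃ₐ[K] AlgebraicClosure K,
      (∀ a ∈ normalClosure K ↥K' (AlgebraicClosure K), τ a = a) ∧ (∀ a ∈ L, τ a = σ a) := by
  haveI := hfin
  set Ω := AlgebraicClosure K
  set K'' : IntermediateField K Ω := normalClosure K ↥K' Ω with hK''def
  haveI : FiniteDimensional K ↥K'' := normalClosure.is_finiteDimensional K ↥K' Ω
  -- primitive element
  obtain ⟨a, ha⟩ := Field.exists_primitive_element K (↥K'')
  set α : Ω := (a : Ω) with hα
  have hαmem : α ∈ K'' := a.2
  have hK'' : K'' = K⟮α⟯ := by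
    apply le_antisymm
    · intro u hu
      have : (⟨u, hu⟩ : ↥K'') ∈ (⊤ : IntermediateField K ↥K'') := trivial
      rw [← ha] at this
      have hmap := IntermediateField.adjoin_map K {a} K''.val
      have : u ∈ (IntermediateField.adjoin K {a}).map K''.val :=
        ⟨⟨u, hu⟩, this, rfl⟩
      rwa [hmap, Set.image_singleton] at this
    · rw [IntermediateField.adjoin_le_iff]
      simpa using hαmem
  -- the minimal polynomial of α over L equals the one over K
  have hintK : IsIntegral K α := Algebra.IsIntegral.isIntegral α
  haveI : Algebra.IsAlgebraic (↥L) Ω := Algebra.IsAlgebraic.tower_top (K := K) (↥L)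
  have hintL : IsIntegral (↥L) α := Algebra.IsIntegral.isIntegral α
  set q : K[X] := minpoly K α with hq
  set p : (↥L)[X] := minpoly (↥L) α with hp
  have hpdvd : p ∣ q.map (algebraMap K ↥L) := minpoly.dvd_map_of_isScalarTower K (↥L) α
  set P : Polynomial Ω := p.map (algebraMap (↥L) Ω) with hP
  have hPdvd : P ∣ q.map (algebraMap K Ω) := by
    have := Polynomial.map_dvd (algebraMap (↥L) Ω) hpdvd
    rwa [Polynomial.map_map, ← IsScalarTower.algebraMap_eq] at this
  have hPmonic : P.Monic := (minpoly.monic hintL).map _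
  have hqmapne : q.map (algebraMap K Ω) ≠ 0 := ((minpoly.monic hintK).map _).ne_zero
  -- all roots of P lie in K''
  have hroots : ∀ r ∈ P.roots, r ∈ K'' := by
    intro r hr
    have hrq : Polynomial.aeval r q = 0 := by
      obtain ⟨c, hc⟩ := hPdvd
      have : P.eval r = 0 := (mem_roots'.mp hr).2
      by_contra hne
      have : (q.map (algebraMap K Ω)).eval r = 0 := by
        rw [hc, eval_mul, this, zero_mul]
      rw [eval_map, ← aeval_def] at this
      exact hne this
    exact mem_of_root K'' hαmem hrq
  -- P lifts to K''
  have hPlift : P ∈ Polynomial.lifts (algebraMap (↥K'') Ω) := by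
    have hPeq : P = (P.roots.map fun r => X - C r).prod :=
      (IsAlgClosed.splits P).eq_prod_roots_of_monic hPmonic
    rw [hPeq]
    apply Subsemiring.multiset_prod_mem
    intro t ht
    obtain ⟨r, hr, rfl⟩ := Multiset.mem_map.mp ht
    rw [Polynomial.mem_lifts]
    exact ⟨X - C ⟨r, hroots r hr⟩, by
      rw [Polynomial.map_sub, Polynomial.map_X, Polynomial.map_C]; rfl⟩
  -- hence the coefficients of p lie in K ( = L ⊓ K'')
  have hcoeff : ∀ n : ℕ, p.coeff n ∈ Set.range (algebraMap K ↥L) := by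
    intro n
    have h1 : ((p.coeff n : Ω)) ∈ K'' := by
      rw [Polynomial.lifts_iff_coeff_lifts] at hPlift
      obtain ⟨c, hc⟩ := hPlift n
      have : P.coeff n = (p.coeff n : Ω) := by rw [hP, Polynomial.coeff_map]; rfl
      rw [this] at hc
      exact hc ▸ c.2
    have h2 : ((p.coeff n : Ω)) ∈ L := (p.coeff n).2
    have : ((p.coeff n : Ω)) ∈ L ⊓ K'' := ⟨h2, h1⟩
    rw [hdisj, IntermediateField.mem_bot] at this
    obtain ⟨k, hk⟩ := this
    refine ⟨k, ?_⟩
    apply Subtype.ext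
    rw [← hk, IsScalarTower.algebraMap_apply K (↥L) Ω]
    rfl
  -- p is the image of q
  have hpq : p = q.map (algebraMap K ↥L) := by
    rw [← Polynomial.lifts_iff_coeff_lifts] at hcoeff
    obtain ⟨p₀, hp₀map, _, hp₀monic⟩ :=
      Polynomial.lifts_and_degree_eq_and_monic hcoeff (minpoly.monic hintL)
    have hroot₀ : Polynomial.aeval α p₀ = 0 := by
      have : Polynomial.aeval α (p₀.map (algebraMap K ↥L)) = 0 := by
        rw [hp₀map]; exact minpoly.aeval _ _
      rwa [Polynomial.aeval_map_algebraMap] at this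
    have hqdvd : q ∣ p₀ := minpoly.dvd K α hroot₀
    have hqmonic : q.Monic := minpoly.monic hintK
    have hpmonic : p.Monic := minpoly.monic hintL
    have h4 : (q.map (algebraMap K ↥L)).natDegree = q.natDegree :=
      hqmonic.natDegree_map _
    have hdeg1 : q.natDegree ≤ p₀.natDegree := Polynomial.natDegree_le_of_dvd hqdvd hp₀monic.ne_zero
    have hdeg2 : p.natDegree ≤ q.natDegree := by
      have := Polynomial.natDegree_le_of_dvd hpdvd ((hqmonic.map (algebraMap K ↥L))).ne_zero
      rwa [h4] at this
    have hdeg3 : p₀.natDegree = p.natDegree := by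
      rw [← hp₀map, hp₀monic.natDegree_map]
    -- monic divisor of equal degree
    obtain ⟨c, hc⟩ := hpdvd
    have hcne : c ≠ 0 := by
      intro h; rw [h, mul_zero] at hc
      exact (hqmonic.map (algebraMap K ↥L)).ne_zero hc
    have hpne : p ≠ 0 := hpmonic.ne_zero
    have hdegc : c.natDegree = 0 := by
      have h5 := Polynomial.natDegree_mul hpne hcne
      rw [← hc, h4] at h5
      omega
    obtain ⟨u, rfl⟩ := Polynomial.natDegree_eq_zero.mp hdegc
    have hu : u = 1 := by
      have h1 : (q.map (algebraMap K ↥L)).leadingCoeff = 1 :=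
        (hqmonic.map (algebraMap K ↥L)).leadingCoeff
      rw [hc, Polynomial.leadingCoeff_mul, hpmonic.leadingCoeff,
        one_mul, Polynomial.leadingCoeff_C] at h1
      exact h1
    rw [hc, hu, map_one, mul_one]
  -- now build the automorphism
  set β : Ω := σ.symm α with hβ
  have hyroot : Polynomial.aeval β p = 0 := by
    rw [hpq, Polynomial.aeval_map_algebraMap]
    have h : Polynomial.aeval β q = σ.symm (Polynomial.aeval α q) :=
      Polynomial.aeval_algHom_apply σ.symm α q
    rw [h, minpoly.aeval, map_zero]
  obtain ⟨δ, hδfix, hδα⟩ := exists_algEquiv_of_root L hyroot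
  refine ⟨δ.trans σ, ?_, ?_⟩
  · intro b hb
    have hτα : σ (δ α) = α := by rw [hδα, hβ, AlgEquiv.apply_symm_apply]
    have hadj : K⟮α⟯ ≤ fixedIF (δ.trans σ) := by
      rw [IntermediateField.adjoin_le_iff]
      intro u hu
      rcases hu with rfl
      show σ (δ α) = α
      exact hτα
    have : b ∈ K⟮α⟯ := hK'' ▸ hb
    exact mem_fixedIF.mp (hadj this)
  · intro b hb
    show σ (δ b) = σ b
    rw [hδfix b hb]


/-- Key lemma (A): for `M ≤ L`, `(M ⊔ K') ⊓ L = M`. -/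
private lemma sup_inf_cancel (L K' : IntermediateField K (AlgebraicClosure K))
    [IsGalois K ↥L] (hfin : FiniteDimensional K ↥K')
    (hdisj : L ⊓ normalClosure K ↥K' (AlgebraicClosure K) = ⊥)
    {M : IntermediateField K (AlgebraicClosure K)} (hM : M ≤ L) :
    (M ⊔ K') ⊓ L = M := by
  apply le_antisymm
  · rintro x ⟨hx1, hx2⟩
    apply mem_of_forall_fixed (F := M)
    intro σ hσ
    obtain ⟨τ, hτK'', hτL⟩ := exists_extend_fixing L K' hfin hdisj σ
    have hfixM : M ≤ fixedIF τ := fun a ha => by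
      rw [mem_fixedIF]
      exact (hτL a (hM ha)).trans (hσ a ha)
    have hK'le : K' ≤ normalClosure K ↥K' (AlgebraicClosure K) := by
      conv_lhs => rw [← IntermediateField.fieldRange_val K']
      exact AlgHom.fieldRange_le_normalClosure K'.val
    have hfixK' : K' ≤ fixedIF τ := fun a ha => by
      rw [mem_fixedIF]
      exact hτK'' a (hK'le ha)
    have hτx : τ x = x := (sup_le hfixM hfixK') hx1
    rw [← hτL x hx2]
    exact hτx
  · exact le_inf le_sup_left hM


/-- Finite chunk lemma: every element of `L ⊔ K'` lies in `L₀ ⊔ K'` for some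
finite-dimensional normal `L₀ ≤ L`. -/
private lemma exists_finite_normal (L K' : IntermediateField K (AlgebraicClosure K))
    [IsGalois K ↥L] {y : AlgebraicClosure K} (hy : y ∈ L ⊔ K') :
    ∃ L₀ : IntermediateField K (AlgebraicClosure K), L₀ ≤ L ∧
      FiniteDimensional K ↥L₀ ∧ Normal K ↥L₀ ∧ y ∈ L₀ ⊔ K' := by
  classical
  have hL : L = ⨆ x : ↥L, K⟮(x : AlgebraicClosure K)⟯ := by
    apply le_antisymm
    · intro u hu
      exact le_iSup (fun x : ↥L => K⟮(x : AlgebraicClosure K)⟯) ⟨u, hu⟩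
        (IntermediateField.mem_adjoin_simple_self K u)
    · exact iSup_le fun x => IntermediateField.adjoin_le_iff.mpr (by simpa using x.2)
  have hy' : y ∈ ⨆ x : ↥L, (K⟮(x : AlgebraicClosure K)⟯ ⊔ K') := by
    rw [← iSup_sup]
    rw [hL] at hy
    exact hy
  obtain ⟨s, hs⟩ := IntermediateField.exists_finset_of_mem_iSup hy'
  set D : IntermediateField K (AlgebraicClosure K) :=
    ⨆ i : {x : ↥L // x ∈ s}, K⟮(i.1 : AlgebraicClosure K)⟯ with hD
  have hDle : D ≤ L := by
    refine iSup_le fun i => ?_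
    exact IntermediateField.adjoin_le_iff.mpr (by simpa using i.1.2)
  have h1 : (⨆ x ∈ s, (K⟮(x : AlgebraicClosure K)⟯ ⊔ K')) ≤ D ⊔ K' := by
    refine iSup₂_le fun x hx => ?_
    refine sup_le_sup ?_ le_rfl
    exact le_iSup (fun i : {x : ↥L // x ∈ s} => K⟮(i.1 : AlgebraicClosure K)⟯) ⟨x, hx⟩
  have hyD : y ∈ D ⊔ K' := h1 hs
  haveI : ∀ i : {x : ↥L // x ∈ s}, FiniteDimensional K ↥K⟮(i.1 : AlgebraicClosure K)⟯ :=
    fun i => IntermediateField.adjoin.finiteDimensional (Algebra.IsIntegral.isIntegral _)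
  haveI : FiniteDimensional K ↥D := IntermediateField.finiteDimensional_iSup_of_finite
  refine ⟨normalClosure K ↥D (AlgebraicClosure K), ?_, inferInstance, inferInstance, ?_⟩
  · rw [normalClosure_le_iff]
    intro f
    rintro _ ⟨d, rfl⟩
    have hdL : (d : AlgebraicClosure K) ∈ L := hDle d.2
    apply mem_of_root L hdL
    have hmp : minpoly K (d : AlgebraicClosure K) = minpoly K d :=
      minpoly.algebraMap_eq (algebraMap ↥D (AlgebraicClosure K)).injective d
    rw [hmp]
    have h0 : Polynomial.aeval (f d) (minpoly K d) = 0 := by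
      rw [Polynomial.aeval_algHom_apply f d (minpoly K d), minpoly.aeval, map_zero]
    exact h0
  · have : D ≤ normalClosure K ↥D (AlgebraicClosure K) := by
      conv_lhs => rw [← IntermediateField.fieldRange_val D]
      exact AlgHom.fieldRange_le_normalClosure D.val
    exact SetLike.le_def.mp (sup_le_sup this (le_refl K')) hyD


/-- Key lemma (B): for `K' ≤ M' ≤ L ⊔ K'`, `(M' ⊓ L) ⊔ K' = M'`. -/
private lemma inf_sup_cancel (L K' : IntermediateField K (AlgebraicClosure K))
    [IsGalois K ↥L]
    {M' : IntermediateField K (AlgebraicClosure K)} (h1 : K' ≤ M') (h2 : M' ≤ L ⊔ K') :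
    (M' ⊓ L) ⊔ K' = M' := by
  apply le_antisymm (sup_le inf_le_left h1)
  intro y hy
  apply mem_of_forall_fixed (F := (M' ⊓ L) ⊔ K')
  intro σ hσ
  obtain ⟨L₀, hL₀L, hfd, hnormal, hyL₀⟩ := exists_finite_normal L K' (h2 hy)
  haveI := hfd; haveI := hnormal
  set res : (AlgebraicClosure K ≃ₐ[K] AlgebraicClosure K) →* (↥L₀ ≃ₐ[K] ↥L₀) :=
    AlgEquiv.restrictNormalHom ↥L₀ with hres
  have hcomm : ∀ (τ : AlgebraicClosure K ≃ₐ[K] AlgebraicClosure K) (x : ↥L₀),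
      ((res τ x : ↥L₀) : AlgebraicClosure K) = τ (x : AlgebraicClosure K) := by
    intro τ x
    exact AlgEquiv.restrictNormal_commutes τ ↥L₀ x
  set H : Subgroup (↥L₀ ≃ₐ[K] ↥L₀) := (M'.fixingSubgroup).map res with hH
  have hfixH : ∀ x : ↥L₀, x ∈ IntermediateField.fixedField H → (x : AlgebraicClosure K) ∈ M' := by
    intro x hx
    apply mem_of_forall_fixed (F := M')
    intro τ hτ
    have hτmem : τ ∈ M'.fixingSubgroup := by
      rw [IntermediateField.mem_fixingSubgroup_iff]
      intro u hu; exact hτ u hu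
    have hresτ : res τ ∈ H := ⟨τ, hτmem, rfl⟩
    have := hx ⟨res τ, hresτ⟩
    have hsmul : res τ x = x := this
    calc τ (x : AlgebraicClosure K) = ((res τ x : ↥L₀) : AlgebraicClosure K) :=
          (hcomm τ x).symm
      _ = (x : AlgebraicClosure K) := by rw [hsmul]
  have hσH : res σ ∈ H := by
    rw [← IntermediateField.fixingSubgroup_fixedField H,
      IntermediateField.mem_fixingSubgroup_iff]
    intro x hx
    have hxM' : ((x : ↥L₀) : AlgebraicClosure K) ∈ M' := hfixH x hx
    have hxL : ((x : ↥L₀) : AlgebraicClosure K) ∈ L := hL₀L (x : ↥L₀).2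
    have hσx : σ ((x : ↥L₀) : AlgebraicClosure K) = ((x : ↥L₀) : AlgebraicClosure K) :=
      hσ _ (SetLike.le_def.mp le_sup_left (⟨hxM', hxL⟩ : ((x : ↥L₀) : AlgebraicClosure K) ∈ M' ⊓ L))
    show res σ x = x
    have : ((res σ x : ↥L₀) : AlgebraicClosure K) = ((x : ↥L₀) : AlgebraicClosure K) := by
      rw [hcomm σ x, hσx]
    exact Subtype.ext this
  obtain ⟨τ, hτmem, hτres⟩ := hσH
  have hτfix : ∀ u ∈ M', τ u = u := fun u hu =>
    (IntermediateField.mem_fixingSubgroup_iff M' τ).mp hτmem u hu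
  have hagree : ∀ a ∈ L₀, σ a = τ a := by
    intro a ha
    calc σ a = ((res σ ⟨a, ha⟩ : ↥L₀) : AlgebraicClosure K) := (hcomm σ ⟨a, ha⟩).symm
      _ = ((res τ ⟨a, ha⟩ : ↥L₀) : AlgebraicClosure K) := by rw [hτres]
      _ = τ a := hcomm τ ⟨a, ha⟩
  -- now conclude σ y = y
  have hK'fixσ : ∀ a ∈ K', σ a = a := fun a ha => hσ a (SetLike.le_def.mp le_sup_right ha)
  have hK'fixτ : ∀ a ∈ K', τ a = a := fun a ha => hτfix a (h1 ha)
  set ε : AlgebraicClosure K ≃ₐ[K] AlgebraicClosure K := σ.trans τ.symm with hε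
  have hfixL₀ : L₀ ≤ fixedIF ε := by
    intro a ha
    rw [mem_fixedIF]
    show τ.symm (σ a) = a
    rw [hagree a ha, AlgEquiv.symm_apply_apply]
  have hfixK' : K' ≤ fixedIF ε := by
    intro a ha
    rw [mem_fixedIF]
    show τ.symm (σ a) = a
    rw [hK'fixσ a ha]
    have := hK'fixτ a ha
    conv_lhs => rw [← this]
    rw [AlgEquiv.symm_apply_apply]
  have hεy : ε y = y := SetLike.le_def.mp (sup_le hfixL₀ hfixK') hyL₀
  have : τ.symm (σ y) = y := hεy
  have h6 : σ y = τ y := by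
    have h7 := congrArg τ this
    rwa [AlgEquiv.apply_symm_apply] at h7
  rw [h6]
  exact hτfix y hy


end Helpers

/-- Let `L/K` be a Galois extension and `K'/K` a finite extension linearly disjoint from `L`
over `K` (inside a fixed algebraic closure; i.e. `L ∩ K'' = K` for the Galois closure `K''`
of `K'`), and let `L' = LK'`.  Then `M ↦ MK'` is an inclusion-preserving bijection between
intermediate fields of `L/K` and intermediate fields of `L'/K'`, with inverse
`M' ↦ M' ∩ L`. -/
theorem galois_base_change_correspondence {K : Type*} [Field K] [CharZero K]
    (L K' : IntermediateField K (AlgebraicClosure K)) [IsGalois K ↥L]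
    (hfin : FiniteDimensional K ↥K')
    (hdisj : L ⊓ normalClosure K ↥K' (AlgebraicClosure K) = ⊥) :
    ∃ e : {M : IntermediateField K (AlgebraicClosure K) // M ≤ L} ≃
        {M' : IntermediateField K (AlgebraicClosure K) // K' ≤ M' ∧ M' ≤ L ⊔ K'},
      (∀ M, (e M : IntermediateField K (AlgebraicClosure K)) = M.1 ⊔ K') ∧
      (∀ M', (e.symm M' : IntermediateField K (AlgebraicClosure K)) = M'.1 ⊓ L) ∧
      (∀ M N, M.1 ≤ N.1 ↔ (e M).1 ≤ (e N).1) := by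
  have hA : ∀ M : IntermediateField K (AlgebraicClosure K), M ≤ L → (M ⊔ K') ⊓ L = M :=
    fun M hM => sup_inf_cancel L K' hfin hdisj hM
  have hB : ∀ M' : IntermediateField K (AlgebraicClosure K),
      K' ≤ M' → M' ≤ L ⊔ K' → (M' ⊓ L) ⊔ K' = M' :=
    fun M' h1 h2 => inf_sup_cancel L K' h1 h2
  refine ⟨{ toFun := fun M => ⟨M.1 ⊔ K', le_sup_right,
              sup_le (M.2.trans le_sup_left) le_sup_right⟩,
            invFun := fun M' => ⟨M'.1 ⊓ L, inf_le_right⟩,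
            left_inv := fun M => Subtype.ext (hA M.1 M.2),
            right_inv := fun M' => Subtype.ext (hB M'.1 M'.2.1 M'.2.2) },
    fun M => rfl, fun M' => rfl, ?_⟩
  intro M N
  constructor
  · intro h
    exact sup_le_sup h le_rfl
  · intro h
    have h2 : (M.1 ⊔ K') ⊓ L ≤ (N.1 ⊔ K') ⊓ L := inf_le_inf h le_rfl
    rwa [hA M.1 M.2, hA N.1 N.2] at h2
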